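/- (Pressure Poisson equation (1.16).) Let a, b, c ∈ ℝ, let U ⊆ ℝ³×ℝ be open, and let (u, P, Q) : U → ℝ³×ℝ×𝒮₀ be a smooth solution of the co-rotational Beris–Edwards system (i)–(iii) on U. Then pointwise on U: ΔP = −∑_{α,β=1}^3 ∂_α∂_β ( u_α u_β + ∂_αQ:∂_βQ − ½|∇Q|² δ_{αβ} ), where all derivatives are in the space variable and |∇Q|² := ∑_α ∂_αQ:∂_αQ. -/

import Mathlib

noncomputable section
open Matrix

/-- Euclidean 3-space. -/
abbrev E3 : Type := EuclideanSpace ℝ (Fin 3)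
/-- Real 3×3 matrices. -/
abbrev M3 : Type := Matrix (Fin 3) (Fin 3) ℝ

/-- Spatial partial derivative `∂_α f` of a scalar function on `ℝ³ × ℝ`. -/
def pdx (α : Fin 3) (f : E3 × ℝ → ℝ) (p : E3 × ℝ) : ℝ :=
  fderiv ℝ (fun y => f (y, p.2)) p.1 (EuclideanSpace.single α 1)

/-- Time derivative `∂_t f` of a scalar function on `ℝ³ × ℝ`. -/
def pdt (f : E3 × ℝ → ℝ) (p : E3 × ℝ) : ℝ := deriv (fun s => f (p.1, s)) p.2

/-- Spatial Laplacian `Δf` of a scalar function on `ℝ³ × ℝ`. -/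
def lapx (f : E3 × ℝ → ℝ) (p : E3 × ℝ) : ℝ := ∑ α, pdx α (fun q => pdx α f q) p

/-- The Landau–De Gennes bulk force
`f_LdG(Q) = aQ − b(Q² − (tr(Q²)/3)I₃) + c·tr(Q²)·Q`. -/
def fLdG (a b c : ℝ) (Q : M3) : M3 :=
  a • Q - b • (Q * Q - ((Q * Q).trace / 3) • (1 : M3)) + (c * (Q * Q).trace) • Q

/-- Vorticity `ω = (∇u − (∇u)ᵀ)/2`, with `(∇u)_{αβ} = ∂_β u_α`. -/
def omg (u : E3 × ℝ → Fin 3 → ℝ) (p : E3 × ℝ) (α β : Fin 3) : ℝ :=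
  (pdx β (fun q => u q α) p - pdx α (fun q => u q β) p) / 2

/-- Molecular field `H = ΔQ − f_LdG(Q)` (entrywise). -/
def Hmat (a b c : ℝ) (Q : E3 × ℝ → M3) (p : E3 × ℝ) (γ δ : Fin 3) : ℝ :=
  lapx (fun q => Q q γ δ) p - fLdG a b c (Q p) γ δ



/-! ### Auxiliary calculus API for `pdx`, `pdt`, `lapx` -/

section S15API

variable {U : Set (E3 × ℝ)} {p : E3 × ℝ} {f g : E3 × ℝ → ℝ}

/-- direction vector for `pdx α`. -/
def vx (α : Fin 3) : E3 × ℝ := (EuclideanSpace.single α 1, 0)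
/-- direction vector for `pdt`. -/
def vt : E3 × ℝ := ((0 : E3), (1 : ℝ))

lemma diffAt (hU : IsOpen U) (hf : ContDiffOn ℝ (⊤ : ℕ∞) f U) (hp : p ∈ U) :
    DifferentiableAt ℝ f p :=
  (hf.contDiffAt (hU.mem_nhds hp)).differentiableAt (by simp)

lemma hasFDerivAt_slicex (hf : DifferentiableAt ℝ f p) :
    HasFDerivAt (fun y => f (y, p.2))
      ((fderiv ℝ f p).comp ((ContinuousLinearMap.id ℝ E3).prod 0)) p.1 :=
  HasFDerivAt.comp p.1 hf.hasFDerivAt ((hasFDerivAt_id p.1).prodMk (hasFDerivAt_const p.2 p.1))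

lemma diffAt_slicex (hf : DifferentiableAt ℝ f p) :
    DifferentiableAt ℝ (fun y => f (y, p.2)) p.1 :=
  (hasFDerivAt_slicex hf).differentiableAt

lemma pdx_eq (hf : DifferentiableAt ℝ f p) (α : Fin 3) :
    pdx α f p = fderiv ℝ f p (vx α) := by
  rw [pdx, (hasFDerivAt_slicex hf).fderiv]
  simp [vx]

lemma hasDerivAt_slicet (hf : DifferentiableAt ℝ f p) :
    HasDerivAt (fun s => f (p.1, s)) (fderiv ℝ f p vt) p.2 :=
  hf.hasFDerivAt.comp_hasDerivAt p.2 ((hasDerivAt_const p.2 p.1).prodMk (hasDerivAt_id p.2))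

lemma pdt_eq (hf : DifferentiableAt ℝ f p) : pdt f p = fderiv ℝ f p vt :=
  (hasDerivAt_slicet hf).deriv

lemma pdx_congr (α : Fin 3) (h : f =ᶠ[nhds p] g) : pdx α f p = pdx α g p := by
  have hc : ContinuousAt (fun y : E3 => (y, p.2)) p.1 :=
    (continuous_id.prodMk continuous_const).continuousAt
  have h2 : (fun y => f (y, p.2)) =ᶠ[nhds p.1] (fun y => g (y, p.2)) := h.comp_tendsto hc
  unfold pdx
  rw [h2.fderiv_eq]

lemma pdt_congr (h : f =ᶠ[nhds p] g) : pdt f p = pdt g p := by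
  have hc : ContinuousAt (fun s : ℝ => (p.1, s)) p.2 :=
    (continuous_const.prodMk continuous_id).continuousAt
  have h2 : (fun s => f (p.1, s)) =ᶠ[nhds p.2] (fun s => g (p.1, s)) := h.comp_tendsto hc
  unfold pdt
  rw [h2.deriv_eq]

lemma pdx_congr_on (hU : IsOpen U) (h : Set.EqOn f g U) (hp : p ∈ U) (α : Fin 3) :
    pdx α f p = pdx α g p :=
  pdx_congr α (Filter.eventuallyEq_of_mem (hU.mem_nhds hp) h)

lemma pdt_congr_on (hU : IsOpen U) (h : Set.EqOn f g U) (hp : p ∈ U) :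
    pdt f p = pdt g p :=
  pdt_congr (Filter.eventuallyEq_of_mem (hU.mem_nhds hp) h)

lemma pdx_const (α : Fin 3) (c : ℝ) : pdx α (fun _ => c) p = 0 := by
  simp [pdx]

lemma pdt_const (c : ℝ) : pdt (fun _ => c) p = 0 := by
  simp [pdt]

lemma pdx_neg (α : Fin 3) : pdx α (fun q => -f q) p = -pdx α f p := by
  unfold pdx
  rw [show (fun y => -f (y, p.2)) = fun y => -(fun y => f (y, p.2)) y from rfl, fderiv_fun_neg]
  simp

lemma pdx_add (α : Fin 3) (hf : DifferentiableAt ℝ f p) (hg : DifferentiableAt ℝ g p) :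
    pdx α (fun q => f q + g q) p = pdx α f p + pdx α g p := by
  unfold pdx
  rw [fderiv_fun_add (diffAt_slicex hf) (diffAt_slicex hg)]
  simp

lemma pdx_sub (α : Fin 3) (hf : DifferentiableAt ℝ f p) (hg : DifferentiableAt ℝ g p) :
    pdx α (fun q => f q - g q) p = pdx α f p - pdx α g p := by
  unfold pdx
  rw [fderiv_fun_sub (diffAt_slicex hf) (diffAt_slicex hg)]
  simp

lemma pdx_mul (α : Fin 3) (hf : DifferentiableAt ℝ f p) (hg : DifferentiableAt ℝ g p) :
    pdx α (fun q => f q * g q) p = pdx α f p * g p + f p * pdx α g p := by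
  unfold pdx
  rw [fderiv_fun_mul (diffAt_slicex hf) (diffAt_slicex hg)]
  simp [smul_eq_mul]
  ring

lemma pdx_const_mul (α : Fin 3) (c : ℝ) (hf : DifferentiableAt ℝ f p) :
    pdx α (fun q => c * f q) p = c * pdx α f p := by
  unfold pdx
  rw [fderiv_const_mul (diffAt_slicex hf) c]
  simp

lemma pdx_sum {ι : Type*} (s : Finset ι) (F : ι → E3 × ℝ → ℝ)
    (h : ∀ i ∈ s, DifferentiableAt ℝ (F i) p) (α : Fin 3) :
    pdx α (fun q => ∑ i ∈ s, F i q) p = ∑ i ∈ s, pdx α (F i) p := by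
  unfold pdx
  rw [fderiv_fun_sum (fun i hi => diffAt_slicex (h i hi))]
  simp

lemma pdt_sum {ι : Type*} (s : Finset ι) (F : ι → E3 × ℝ → ℝ)
    (h : ∀ i ∈ s, DifferentiableAt ℝ (F i) p) :
    pdt (fun q => ∑ i ∈ s, F i q) p = ∑ i ∈ s, pdt (F i) p := by
  unfold pdt
  rw [deriv_fun_sum (fun i hi => (hasDerivAt_slicet (h i hi)).differentiableAt)]

lemma sm_fderiv (hU : IsOpen U) (hf : ContDiffOn ℝ (⊤ : ℕ∞) f U) :
    ContDiffOn ℝ (⊤ : ℕ∞) (fderiv ℝ f) U :=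
  hf.fderiv_of_isOpen hU (le_of_eq rfl)

lemma sm_fderiv_apply (hU : IsOpen U) (hf : ContDiffOn ℝ (⊤ : ℕ∞) f U) (v : E3 × ℝ) :
    ContDiffOn ℝ (⊤ : ℕ∞) (fun q => fderiv ℝ f q v) U :=
  (sm_fderiv hU hf).clm_apply contDiffOn_const

lemma sm_pdx (hU : IsOpen U) (α : Fin 3) (hf : ContDiffOn ℝ (⊤ : ℕ∞) f U) :
    ContDiffOn ℝ (⊤ : ℕ∞) (pdx α f) U :=
  (sm_fderiv_apply hU hf (vx α)).congr fun q hq => pdx_eq (diffAt hU hf hq) α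

lemma sm_pdt (hU : IsOpen U) (hf : ContDiffOn ℝ (⊤ : ℕ∞) f U) :
    ContDiffOn ℝ (⊤ : ℕ∞) (pdt f) U :=
  (sm_fderiv_apply hU hf vt).congr fun q hq => pdt_eq (diffAt hU hf hq)

lemma sm_lapx (hU : IsOpen U) (hf : ContDiffOn ℝ (⊤ : ℕ∞) f U) :
    ContDiffOn ℝ (⊤ : ℕ∞) (lapx f) U := by
  unfold lapx
  exact ContDiffOn.sum fun α _ => sm_pdx hU α (sm_pdx hU α hf)

lemma fderiv2_swap (hU : IsOpen U) (hf : ContDiffOn ℝ (⊤ : ℕ∞) f U) (hp : p ∈ U)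
    (v w : E3 × ℝ) :
    fderiv ℝ (fun q => fderiv ℝ f q v) p w = fderiv ℝ (fun q => fderiv ℝ f q w) p v := by
  have hs : IsSymmSndFDerivAt ℝ f p :=
    (hf.contDiffAt (hU.mem_nhds hp)).isSymmSndFDerivAt (by rw [minSmoothness_of_isRCLikeNormedField]; exact WithTop.coe_le_coe.mpr le_top)
  have hd : DifferentiableAt ℝ (fderiv ℝ f) p :=
    ((sm_fderiv hU hf).contDiffAt (hU.mem_nhds hp)).differentiableAt (by simp)
  have h1 : ∀ v w : E3 × ℝ,
      fderiv ℝ (fun q => fderiv ℝ f q v) p w = fderiv ℝ (fderiv ℝ f) p w v := by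
    intro v w
    rw [fderiv_clm_apply hd (differentiableAt_const v)]
    simp
  rw [h1, h1, hs w v]

lemma pdx_pdx_comm (hU : IsOpen U) (hf : ContDiffOn ℝ (⊤ : ℕ∞) f U) (hp : p ∈ U)
    (α β : Fin 3) : pdx α (pdx β f) p = pdx β (pdx α f) p := by
  have e1 : ∀ γ : Fin 3, Set.EqOn (pdx γ f) (fun q => fderiv ℝ f q (vx γ)) U :=
    fun γ q hq => pdx_eq (diffAt hU hf hq) γ
  have hd : ∀ v : E3 × ℝ, DifferentiableAt ℝ (fun q => fderiv ℝ f q v) p :=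
    fun v => diffAt hU (sm_fderiv_apply hU hf v) hp
  rw [pdx_congr_on hU (e1 β) hp α, pdx_congr_on hU (e1 α) hp β,
    pdx_eq (hd (vx β)) α, pdx_eq (hd (vx α)) β, fderiv2_swap hU hf hp (vx β) (vx α)]

lemma pdx_pdt_comm (hU : IsOpen U) (hf : ContDiffOn ℝ (⊤ : ℕ∞) f U) (hp : p ∈ U)
    (α : Fin 3) : pdx α (pdt f) p = pdt (pdx α f) p := by
  have e1 : Set.EqOn (pdt f) (fun q => fderiv ℝ f q vt) U :=
    fun q hq => pdt_eq (diffAt hU hf hq)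
  have e2 : Set.EqOn (pdx α f) (fun q => fderiv ℝ f q (vx α)) U :=
    fun q hq => pdx_eq (diffAt hU hf hq) α
  have hd : ∀ v : E3 × ℝ, DifferentiableAt ℝ (fun q => fderiv ℝ f q v) p :=
    fun v => diffAt hU (sm_fderiv_apply hU hf v) hp
  rw [pdx_congr_on hU e1 hp α, pdt_congr_on hU e2 hp,
    pdx_eq (hd vt) α, pdt_eq (hd (vx α)), fderiv2_swap hU hf hp vt (vx α)]

lemma lapx_congr_on (hU : IsOpen U) (h : Set.EqOn f g U) (hp : p ∈ U) :
    lapx f p = lapx g p := by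
  unfold lapx
  exact Finset.sum_congr rfl fun α _ =>
    pdx_congr_on hU (fun q hq => pdx_congr_on hU h hq α) hp α

end S15API

lemma lapx_apply (f : E3 × ℝ → ℝ) (q : E3 × ℝ) :
    lapx f q = ∑ β, pdx β (pdx β f) q := rfl

lemma fLdG_entry (a b c : ℝ) (M : M3) (γ δ : Fin 3) :
    fLdG a b c M γ δ =
      a * M γ δ - b * ((∑ k, M γ k * M k δ)
        - ((∑ i, ∑ k, M i k * M k i) / 3) * (if γ = δ then 1 else 0))
      + (c * (∑ i, ∑ k, M i k * M k i)) * M γ δ := by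
  simp [fLdG, Matrix.mul_apply, Matrix.trace, Matrix.diag, Matrix.one_apply,
    Matrix.smul_apply, smul_eq_mul, mul_ite, mul_one, mul_zero]

lemma fLdG_symm (a b c : ℝ) (M : M3) (h : M.IsSymm) (γ δ : Fin 3) :
    fLdG a b c M γ δ = fLdG a b c M δ γ := by
  have hM : ∀ i j, M i j = M j i := fun i j => (h.apply j i).symm ▸ rfl
  rw [fLdG_entry, fLdG_entry]
  have h1 : (∑ k, M γ k * M k δ) = ∑ k, M δ k * M k γ := by
    refine Finset.sum_congr rfl fun k _ => ?_
    rw [hM γ k, hM k δ]; ring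
  rw [h1, hM γ δ]
  simp [eq_comm]

/-- contraction of symmetric second derivatives with an antisymmetric family vanishes. -/
lemma sum_pdx_pdx_antisym {U : Set (E3 × ℝ)} (hU : IsOpen U) {p : E3 × ℝ}
    {S : Fin 3 → Fin 3 → E3 × ℝ → ℝ}
    (hsm : ∀ α β, ContDiffOn ℝ (⊤ : ℕ∞) (S α β) U)
    (hanti : ∀ q ∈ U, ∀ α β, S α β q = -S β α q) (hp : p ∈ U) :
    ∑ α, ∑ β, pdx α (pdx β (S α β)) p = 0 := by
  have key : ∀ α β : Fin 3,
      pdx α (pdx β (S α β)) p = -pdx β (pdx α (S β α)) p := by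
    intro α β
    rw [pdx_pdx_comm hU (hsm α β) hp α β]
    have e2 : Set.EqOn (pdx α (S α β)) (fun q => -(pdx α (S β α) q)) U := by
      intro q hq
      rw [pdx_congr_on hU (fun z hz => hanti z hz α β) hq α]
      exact pdx_neg α
    rw [pdx_congr_on hU e2 hp β, pdx_neg β]
  have h2 : ∑ α, ∑ β, pdx α (pdx β (S α β)) p
      = -∑ α, ∑ β, pdx α (pdx β (S α β)) p := by
    calc ∑ α, ∑ β, pdx α (pdx β (S α β)) p
        = ∑ α, ∑ β, -pdx β (pdx α (S β α)) p :=
          Finset.sum_congr rfl fun α _ => Finset.sum_congr rfl fun β _ => key α β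
      _ = -∑ α, ∑ β, pdx β (pdx α (S β α)) p := by
          simp [Finset.sum_neg_distrib]
      _ = -∑ β, ∑ α, pdx β (pdx α (S β α)) p := by rw [Finset.sum_comm]
      _ = -∑ α, ∑ β, pdx α (pdx β (S α β)) p := rfl
  linarith

/-- Pressure Poisson equation (1.16).
For a smooth solution `(u, P, Q)` of the co-rotational Beris–Edwards system on an open
`U ⊆ ℝ³×ℝ`, one has pointwise on `U`:
`ΔP = −∑_{α,β} ∂_α∂_β (u_α u_β + ∂_αQ:∂_βQ − ½|∇Q|² δ_{αβ})`. -/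
theorem statement_15 (a b c : ℝ) (U : Set (E3 × ℝ)) (hU : IsOpen U)
    (u : E3 × ℝ → Fin 3 → ℝ) (P : E3 × ℝ → ℝ) (Q : E3 × ℝ → M3)
    (hu : ∀ i, ContDiffOn ℝ (⊤ : ℕ∞) (fun p => u p i) U)
    (hP : ContDiffOn ℝ (⊤ : ℕ∞) P U)
    (hQ : ∀ γ δ : Fin 3, ContDiffOn ℝ (⊤ : ℕ∞) (fun p => Q p γ δ) U)
    (hQsym : ∀ p ∈ U, (Q p).IsSymm) (hQtr : ∀ p ∈ U, (Q p).trace = 0)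
    (heqQ : ∀ p ∈ U, ∀ α β : Fin 3,
      pdt (fun q => Q q α β) p + (∑ γ, u p γ * pdx γ (fun q => Q q α β) p)
          - (∑ γ, omg u p α γ * Q p γ β) + (∑ γ, Q p α γ * omg u p γ β)
        = lapx (fun q => Q q α β) p - fLdG a b c (Q p) α β)
    (hequ : ∀ p ∈ U, ∀ α : Fin 3,
      pdt (fun q => u q α) p + (∑ β, u p β * pdx β (fun q => u q α) p) + pdx α P p
        = lapx (fun q => u q α) p
          - (∑ γ, ∑ δ, pdx α (fun q => Q q γ δ) p * lapx (fun q => Q q γ δ) p)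
          + ∑ β, pdx β (fun q => ∑ γ,
              (Q q α γ * Hmat a b c Q q γ β - Hmat a b c Q q α γ * Q q γ β)) p)
    (hdiv : ∀ p ∈ U, (∑ α, pdx α (fun q => u q α) p) = 0) :
    ∀ p ∈ U,
      lapx P p
        = -∑ α, ∑ β, pdx α (fun q => pdx β (fun z =>
            u z α * u z β
              + (∑ γ, ∑ δ, pdx α (fun w => Q w γ δ) z * pdx β (fun w => Q w γ δ) z)
              - 1 / 2 * (∑ μ, ∑ γ, ∑ δ, (pdx μ (fun w => Q w γ δ) z) ^ 2)
                * (if α = β then (1 : ℝ) else 0)) q) p := by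

  intro p hp
  have D : ∀ {h : E3 × ℝ → ℝ}, ContDiffOn ℝ (⊤ : ℕ∞) h U → ∀ {q : E3 × ℝ}, q ∈ U →
      DifferentiableAt ℝ h q := fun {h} hs {q} hq => diffAt hU hs hq
  have smdQ : ∀ α γ δ : Fin 3, ContDiffOn ℝ (⊤ : ℕ∞) (pdx α (fun w => Q w γ δ)) U :=
    fun α γ δ => sm_pdx hU α (hQ γ δ)
  have smLQ : ∀ γ δ : Fin 3, ContDiffOn ℝ (⊤ : ℕ∞) (lapx (fun w => Q w γ δ)) U :=
    fun γ δ => sm_lapx hU (hQ γ δ)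
  have smtr : ContDiffOn ℝ (⊤ : ℕ∞) (fun q => ∑ i, ∑ k, Q q i k * Q q k i) U :=
    ContDiffOn.sum fun i _ => ContDiffOn.sum fun k _ => (hQ i k).mul (hQ k i)
  have smF : ∀ γ δ : Fin 3, ContDiffOn ℝ (⊤ : ℕ∞) (fun q => fLdG a b c (Q q) γ δ) U := by
    intro γ δ
    have h1 : ContDiffOn ℝ (⊤ : ℕ∞) (fun q =>
        a * Q q γ δ - b * ((∑ k, Q q γ k * Q q k δ)
          - ((∑ i, ∑ k, Q q i k * Q q k i) / 3) * (if γ = δ then 1 else 0))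
        + (c * (∑ i, ∑ k, Q q i k * Q q k i)) * Q q γ δ) U :=
      ContDiffOn.add (ContDiffOn.sub (contDiffOn_const.mul (hQ γ δ))
        (contDiffOn_const.mul (ContDiffOn.sub
          (ContDiffOn.sum fun k _ => (hQ γ k).mul (hQ k δ))
          ((smtr.div_const 3).mul contDiffOn_const))))
        ((contDiffOn_const.mul smtr).mul (hQ γ δ))
    exact h1.congr fun q _ => fLdG_entry a b c (Q q) γ δ
  have smH : ∀ γ δ : Fin 3, ContDiffOn ℝ (⊤ : ℕ∞) (fun q => Hmat a b c Q q γ δ) U :=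
    fun γ δ => (smLQ γ δ).sub (smF γ δ)
  have smSS : ∀ α β : Fin 3, ContDiffOn ℝ (⊤ : ℕ∞)
      (fun z => ∑ γ, (Q z α γ * Hmat a b c Q z γ β - Hmat a b c Q z α γ * Q z γ β)) U :=
    fun α β => ContDiffOn.sum fun γ _ => ((hQ α γ).mul (smH γ β)).sub ((smH α γ).mul (hQ γ β))
  have smUU : ∀ α β : Fin 3, ContDiffOn ℝ (⊤ : ℕ∞) (fun z => u z α * u z β) U :=
    fun α β => (hu α).mul (hu β)
  have smCC : ∀ α β : Fin 3, ContDiffOn ℝ (⊤ : ℕ∞) (fun z => ∑ γ, ∑ δ, pdx α (fun w => Q w γ δ) z * pdx β (fun w => Q w γ δ) z) U :=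
    fun α β => ContDiffOn.sum fun γ _ => ContDiffOn.sum fun δ _ => (smdQ α γ δ).mul (smdQ β γ δ)
  have smGG : ContDiffOn ℝ (⊤ : ℕ∞) (fun z => ∑ μ, ∑ γ, ∑ δ, (pdx μ (fun w => Q w γ δ) z) ^ 2) U :=
    ContDiffOn.sum fun μ _ => ContDiffOn.sum fun γ _ => ContDiffOn.sum fun δ _ =>
      (smdQ μ γ δ).pow 2
  have smAQ : ∀ α : Fin 3, ContDiffOn ℝ (⊤ : ℕ∞) (fun q => ∑ γ, ∑ δ, pdx α (fun w => Q w γ δ) q * lapx (fun w => Q w γ δ) q) U :=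
    fun α => ContDiffOn.sum fun γ _ => ContDiffOn.sum fun δ _ => (smdQ α γ δ).mul (smLQ γ δ)
  have smCV : ∀ α : Fin 3, ContDiffOn ℝ (⊤ : ℕ∞) (fun q => ∑ β, u q β * pdx β (fun w => u w α) q) U :=
    fun α => ContDiffOn.sum fun β _ => (hu β).mul (sm_pdx hU β (hu α))
  have smSD : ∀ α : Fin 3, ContDiffOn ℝ (⊤ : ℕ∞) (fun q => ∑ β, pdx β (fun z => ∑ γ, (Q z α γ * Hmat a b c Q z γ β - Hmat a b c Q z α γ * Q z γ β)) q) U :=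
    fun α => ContDiffOn.sum fun β _ => sm_pdx hU β (smSS α β)
  have hQs : ∀ q ∈ U, ∀ i j : Fin 3, Q q i j = Q q j i :=
    fun q hq i j => (((hQsym q hq).apply j i).symm ▸ rfl : Q q i j = Q q j i)
  have hHs : ∀ q ∈ U, ∀ i j : Fin 3, Hmat a b c Q q i j = Hmat a b c Q q j i := by
    intro q hq i j
    have h1 : lapx (fun w => Q w i j) q = lapx (fun w => Q w j i) q :=
      lapx_congr_on hU (fun z hz => hQs z hz i j) hq
    have h2 := fLdG_symm a b c (Q q) (hQsym q hq) i j
    simp only [Hmat, h1, h2]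
  have hSSanti : ∀ q ∈ U, ∀ α β : Fin 3,
      (∑ γ, (Q q α γ * Hmat a b c Q q γ β - Hmat a b c Q q α γ * Q q γ β))
        = -(∑ γ, (Q q β γ * Hmat a b c Q q γ α - Hmat a b c Q q β γ * Q q γ α)) := by
    intro q hq α β
    rw [← Finset.sum_neg_distrib]
    refine Finset.sum_congr rfl fun γ _ => ?_
    rw [hQs q hq β γ, hHs q hq γ α, hHs q hq β γ, hQs q hq γ α]
    ring
  have hdivEq : Set.EqOn (fun q => ∑ α, pdx α (fun w => u w α) q) (fun _ => (0:ℝ)) U :=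
    fun q hq => hdiv q hq
  -- momentum equation, solved for the pressure gradient
  have hPx : ∀ α : Fin 3, Set.EqOn (pdx α P)
      (fun q => lapx (fun w => u w α) q
        - (∑ γ, ∑ δ, pdx α (fun w => Q w γ δ) q * lapx (fun w => Q w γ δ) q)
        + (∑ β, pdx β (fun z => ∑ γ, (Q z α γ * Hmat a b c Q z γ β - Hmat a b c Q z α γ * Q z γ β)) q)
        - pdt (fun w => u w α) q
        - ∑ β, u q β * pdx β (fun w => u w α) q) U := by
    intro α q hq
    have e := hequ q hq α
    dsimp only
    linarith
  -- expand the Laplacian of P using the momentum equation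
  have hL1 : lapx P p
      = ∑ α, (pdx α (lapx (fun w => u w α)) p
        - pdx α (fun q => ∑ γ, ∑ δ, pdx α (fun w => Q w γ δ) q * lapx (fun w => Q w γ δ) q) p
        + pdx α (fun q => ∑ β, pdx β (fun z => ∑ γ, (Q z α γ * Hmat a b c Q z γ β - Hmat a b c Q z α γ * Q z γ β)) q) p
        - pdx α (pdt (fun w => u w α)) p
        - pdx α (fun q => ∑ β, u q β * pdx β (fun w => u w α) q) p) := by
    rw [lapx_apply]
    refine Finset.sum_congr rfl fun α _ => ?_
    rw [pdx_congr_on hU (hPx α) hp α]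
    have d1 : DifferentiableAt ℝ (lapx (fun w => u w α)) p := D (sm_lapx hU (hu α)) hp
    have d2 : DifferentiableAt ℝ (fun q => ∑ γ, ∑ δ, pdx α (fun w => Q w γ δ) q * lapx (fun w => Q w γ δ) q) p := D (smAQ α) hp
    have d3 : DifferentiableAt ℝ (fun q => ∑ β, pdx β (fun z => ∑ γ, (Q z α γ * Hmat a b c Q z γ β - Hmat a b c Q z α γ * Q z γ β)) q) p := D (smSD α) hp
    have d4 : DifferentiableAt ℝ (pdt (fun w => u w α)) p := D (sm_pdt hU (hu α)) hp
    have d5 : DifferentiableAt ℝ (fun q => ∑ β, u q β * pdx β (fun w => u w α) q) p := D (smCV α) hp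
    rw [pdx_sub α (((d1.fun_sub d2).fun_add d3).fun_sub d4) d5,
        pdx_sub α ((d1.fun_sub d2).fun_add d3) d4,
        pdx_add α (d1.fun_sub d2) d3,
        pdx_sub α d1 d2]
  have hL2 : lapx P p
      = (∑ α, pdx α (lapx (fun w => u w α)) p)
        - (∑ α, pdx α (fun q => ∑ γ, ∑ δ, pdx α (fun w => Q w γ δ) q * lapx (fun w => Q w γ δ) q) p)
        + (∑ α, pdx α (fun q => ∑ β, pdx β (fun z => ∑ γ, (Q z α γ * Hmat a b c Q z γ β - Hmat a b c Q z α γ * Q z γ β)) q) p)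
        - (∑ α, pdx α (pdt (fun w => u w α)) p)
        - (∑ α, pdx α (fun q => ∑ β, u q β * pdx β (fun w => u w α) q) p) := by
    rw [hL1, Finset.sum_sub_distrib, Finset.sum_sub_distrib, Finset.sum_add_distrib,
      Finset.sum_sub_distrib]

  -- Claim 1: divergence of the Laplacian term vanishes
  have C1 : (∑ α, pdx α (lapx (fun w => u w α)) p) = 0 := by
    have step : ∀ α : Fin 3, pdx α (lapx (fun w => u w α)) p
        = ∑ β, pdx β (pdx β (pdx α (fun w => u w α))) p := by
      intro α
      have e : Set.EqOn (lapx (fun w => u w α))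
          (fun q => ∑ β, pdx β (pdx β (fun w => u w α)) q) U := fun q _ => rfl
      rw [pdx_congr_on hU e hp α,
        pdx_sum Finset.univ _ (fun β _ => D (sm_pdx hU β (sm_pdx hU β (hu α))) hp) α]
      refine Finset.sum_congr rfl fun β _ => ?_
      rw [pdx_pdx_comm hU (sm_pdx hU β (hu α)) hp α β]
      exact pdx_congr_on hU (fun q hq => pdx_pdx_comm hU (hu α) hq α β) hp β
    rw [Finset.sum_congr rfl fun α _ => step α, Finset.sum_comm]
    refine Finset.sum_eq_zero fun β _ => ?_
    have e2 : Set.EqOn (pdx β (fun q => ∑ α, pdx α (fun w => u w α) q)) (fun _ => (0:ℝ)) U := by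
      intro q hq
      rw [pdx_congr_on hU hdivEq hq β]
      exact pdx_const β 0
    calc ∑ α, pdx β (pdx β (pdx α (fun w => u w α))) p
        = pdx β (fun q => ∑ α, pdx β (pdx α (fun w => u w α)) q) p :=
          (pdx_sum Finset.univ _ (fun α _ => D (sm_pdx hU β (sm_pdx hU α (hu α))) hp) β).symm
      _ = pdx β (pdx β (fun q => ∑ α, pdx α (fun w => u w α) q)) p :=
          pdx_congr_on hU (fun q hq =>
            (pdx_sum Finset.univ _ (fun α _ => D (sm_pdx hU α (hu α)) hq) β).symm) hp β
      _ = pdx β (fun _ => (0:ℝ)) p := pdx_congr_on hU e2 hp β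
      _ = 0 := pdx_const β 0
  -- Claim 2: divergence of the time derivative vanishes
  have C2 : (∑ α, pdx α (pdt (fun w => u w α)) p) = 0 := by
    rw [Finset.sum_congr rfl fun α _ => pdx_pdt_comm hU (hu α) hp α,
      ← pdt_sum Finset.univ _ (fun α _ => D (sm_pdx hU α (hu α)) hp),
      pdt_congr_on hU hdivEq hp]
    exact pdt_const 0
  -- Claim 3: the antisymmetric stress term vanishes
  have C3 : (∑ α, pdx α (fun q => ∑ β, pdx β (fun z => ∑ γ, (Q z α γ * Hmat a b c Q z γ β - Hmat a b c Q z α γ * Q z γ β)) q) p) = 0 := by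
    rw [Finset.sum_congr rfl fun α _ =>
      pdx_sum Finset.univ _ (fun β _ => D (sm_pdx hU β (smSS α β)) hp) α]
    exact sum_pdx_pdx_antisym hU (fun α β => smSS α β) (fun q hq α β => hSSanti q hq α β) hp
  -- Claim 5: the convection term
  have C5 : (∑ α, pdx α (fun q => ∑ β, u q β * pdx β (fun w => u w α) q) p)
      = ∑ α, ∑ β, pdx α (pdx β (fun z => u z α * u z β)) p := by
    refine Finset.sum_congr rfl fun α _ => ?_
    have e : Set.EqOn (fun q => ∑ β, u q β * pdx β (fun w => u w α) q)
        (fun q => ∑ β, pdx β (fun z => u z α * u z β) q) U := by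
      intro q hq
      have h2 : ∀ β : Fin 3, pdx β (fun z => u z α * u z β) q
          = pdx β (fun w => u w α) q * u q β + u q α * pdx β (fun w => u w β) q :=
        fun β => pdx_mul β (D (hu α) hq) (D (hu β) hq)
      dsimp only
      calc (∑ β, u q β * pdx β (fun w => u w α) q)
          = ∑ β, (pdx β (fun w => u w α) q * u q β + u q α * pdx β (fun w => u w β) q) := by
            rw [Finset.sum_add_distrib, ← Finset.mul_sum, hdiv q hq, mul_zero, add_zero]
            exact Finset.sum_congr rfl fun β _ => mul_comm _ _
        _ = ∑ β, pdx β (fun z => u z α * u z β) q :=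
            Finset.sum_congr rfl fun β _ => (h2 β).symm
    rw [pdx_congr_on hU e hp α]
    exact pdx_sum Finset.univ _ (fun β _ => D (sm_pdx hU β (smUU α β)) hp) α

  -- Claim 4: the Landau-de Gennes stress identity
  have C4 : ∀ α : Fin 3,
      pdx α (fun q => ∑ γ, ∑ δ, pdx α (fun w => Q w γ δ) q * lapx (fun w => Q w γ δ) q) p
      = (∑ β, pdx α (pdx β (fun z => ∑ γ, ∑ δ,
            pdx α (fun w => Q w γ δ) z * pdx β (fun w => Q w γ δ) z)) p)
        - 1/2 * pdx α (pdx α (fun z => ∑ μ, ∑ γ, ∑ δ, (pdx μ (fun w => Q w γ δ) z) ^ 2)) p := by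
    intro α
    have e : Set.EqOn
        (fun q => ∑ γ, ∑ δ, pdx α (fun w => Q w γ δ) q * lapx (fun w => Q w γ δ) q)
        (fun q => (∑ β, pdx β (fun z => ∑ γ, ∑ δ,
            pdx α (fun w => Q w γ δ) z * pdx β (fun w => Q w γ δ) z) q)
          - 1/2 * pdx α (fun z => ∑ μ, ∑ γ, ∑ δ, (pdx μ (fun w => Q w γ δ) z) ^ 2) q) U := by
      intro q hq
      have eCC : ∀ β : Fin 3, pdx β (fun z => ∑ γ, ∑ δ,
            pdx α (fun w => Q w γ δ) z * pdx β (fun w => Q w γ δ) z) q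
          = ∑ γ, ∑ δ, (pdx β (pdx α (fun w => Q w γ δ)) q * pdx β (fun w => Q w γ δ) q
              + pdx α (fun w => Q w γ δ) q * pdx β (pdx β (fun w => Q w γ δ)) q) := by
        intro β
        rw [pdx_sum Finset.univ _
          (fun γ _ => D (ContDiffOn.sum fun δ _ => (smdQ α γ δ).mul (smdQ β γ δ)) hq) β]
        refine Finset.sum_congr rfl fun γ _ => ?_
        rw [pdx_sum Finset.univ _ (fun δ _ => D ((smdQ α γ δ).mul (smdQ β γ δ)) hq) β]
        refine Finset.sum_congr rfl fun δ _ => ?_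
        exact pdx_mul β (D (smdQ α γ δ) hq) (D (smdQ β γ δ) hq)
      have eG : pdx α (fun z => ∑ μ, ∑ γ, ∑ δ, (pdx μ (fun w => Q w γ δ) z) ^ 2) q
          = 2 * ∑ μ, ∑ γ, ∑ δ,
              pdx μ (pdx α (fun w => Q w γ δ)) q * pdx μ (fun w => Q w γ δ) q := by
        rw [pdx_sum Finset.univ _ (fun μ _ => D (ContDiffOn.sum fun γ _ =>
            ContDiffOn.sum fun δ _ => (smdQ μ γ δ).pow 2) hq) α, Finset.mul_sum]
        refine Finset.sum_congr rfl fun μ _ => ?_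
        rw [pdx_sum Finset.univ _
          (fun γ _ => D (ContDiffOn.sum fun δ _ => (smdQ μ γ δ).pow 2) hq) α, Finset.mul_sum]
        refine Finset.sum_congr rfl fun γ _ => ?_
        rw [pdx_sum Finset.univ _ (fun δ _ => D ((smdQ μ γ δ).pow 2) hq) α, Finset.mul_sum]
        refine Finset.sum_congr rfl fun δ _ => ?_
        have hsq : (fun z => (pdx μ (fun w => Q w γ δ) z) ^ 2)
            = fun z => pdx μ (fun w => Q w γ δ) z * pdx μ (fun w => Q w γ δ) z := by
          funext z; ring
        rw [hsq, pdx_mul α (D (smdQ μ γ δ) hq) (D (smdQ μ γ δ) hq),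
          pdx_pdx_comm hU (hQ γ δ) hq α μ]
        ring
      dsimp only
      rw [eG, Finset.sum_congr rfl fun β _ => eCC β]
      have h1 : (∑ β : Fin 3, ∑ γ, ∑ δ,
            (pdx β (pdx α (fun w => Q w γ δ)) q * pdx β (fun w => Q w γ δ) q
              + pdx α (fun w => Q w γ δ) q * pdx β (pdx β (fun w => Q w γ δ)) q))
          = (∑ β : Fin 3, ∑ γ, ∑ δ,
              pdx β (pdx α (fun w => Q w γ δ)) q * pdx β (fun w => Q w γ δ) q)
            + (∑ β : Fin 3, ∑ γ, ∑ δ,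
              pdx α (fun w => Q w γ δ) q * pdx β (pdx β (fun w => Q w γ δ)) q) := by
        simp only [Finset.sum_add_distrib]
      have hY : (∑ β : Fin 3, ∑ γ, ∑ δ,
            pdx α (fun w => Q w γ δ) q * pdx β (pdx β (fun w => Q w γ δ)) q)
          = ∑ γ, ∑ δ, pdx α (fun w => Q w γ δ) q * lapx (fun w => Q w γ δ) q := by
        calc (∑ β : Fin 3, ∑ γ, ∑ δ,
              pdx α (fun w => Q w γ δ) q * pdx β (pdx β (fun w => Q w γ δ)) q)
            = ∑ γ, ∑ β : Fin 3, ∑ δ,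
              pdx α (fun w => Q w γ δ) q * pdx β (pdx β (fun w => Q w γ δ)) q :=
              Finset.sum_comm
          _ = ∑ γ, ∑ δ, ∑ β : Fin 3,
              pdx α (fun w => Q w γ δ) q * pdx β (pdx β (fun w => Q w γ δ)) q :=
              Finset.sum_congr rfl fun γ _ => Finset.sum_comm
          _ = ∑ γ, ∑ δ, pdx α (fun w => Q w γ δ) q * lapx (fun w => Q w γ δ) q := by
              refine Finset.sum_congr rfl fun γ _ => Finset.sum_congr rfl fun δ _ => ?_
              rw [lapx_apply, Finset.mul_sum]
      linarith [h1, hY]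
    rw [pdx_congr_on hU e hp α]
    have dS : DifferentiableAt ℝ (fun q => ∑ β, pdx β (fun z => ∑ γ, ∑ δ,
        pdx α (fun w => Q w γ δ) z * pdx β (fun w => Q w γ δ) z) q) p :=
      D (ContDiffOn.sum fun β _ => sm_pdx hU β (smCC α β)) hp
    have dG : DifferentiableAt ℝ
        (pdx α (fun z => ∑ μ, ∑ γ, ∑ δ, (pdx μ (fun w => Q w γ δ) z) ^ 2)) p :=
      D (sm_pdx hU α smGG) hp
    rw [pdx_sub α dS (DifferentiableAt.const_mul dG (1/2)),
      pdx_const_mul α (1/2) dG,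
      pdx_sum Finset.univ _ (fun β _ => D (sm_pdx hU β (smCC α β)) hp) α]

  -- reshaping the right-hand side
  have hR : ∀ α β : Fin 3,
      pdx α (fun q => pdx β (fun z =>
            u z α * u z β
              + (∑ γ, ∑ δ, pdx α (fun w => Q w γ δ) z * pdx β (fun w => Q w γ δ) z)
              - 1 / 2 * (∑ μ, ∑ γ, ∑ δ, (pdx μ (fun w => Q w γ δ) z) ^ 2)
                * (if α = β then (1 : ℝ) else 0)) q) p
        = pdx α (pdx β (fun z => u z α * u z β)) p + pdx α (pdx β (fun z => ∑ γ, ∑ δ, pdx α (fun w => Q w γ δ) z * pdx β (fun w => Q w γ δ) z)) p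
          - ((if α = β then (1:ℝ) else 0) * (1/2)) * pdx α (pdx β (fun z => ∑ μ, ∑ γ, ∑ δ, (pdx μ (fun w => Q w γ δ) z) ^ 2)) p := by
    intro α β
    have hrw : (fun z =>
            u z α * u z β
              + (∑ γ, ∑ δ, pdx α (fun w => Q w γ δ) z * pdx β (fun w => Q w γ δ) z)
              - 1 / 2 * (∑ μ, ∑ γ, ∑ δ, (pdx μ (fun w => Q w γ δ) z) ^ 2)
                * (if α = β then (1 : ℝ) else 0))
        = fun z => (u z α * u z β
            + (∑ γ, ∑ δ, pdx α (fun w => Q w γ δ) z * pdx β (fun w => Q w γ δ) z))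
          - ((if α = β then (1:ℝ) else 0) * (1/2))
            * (∑ μ, ∑ γ, ∑ δ, (pdx μ (fun w => Q w γ δ) z) ^ 2) := by
      funext z; ring
    have eT : Set.EqOn (fun q => pdx β (fun z =>
            u z α * u z β
              + (∑ γ, ∑ δ, pdx α (fun w => Q w γ δ) z * pdx β (fun w => Q w γ δ) z)
              - 1 / 2 * (∑ μ, ∑ γ, ∑ δ, (pdx μ (fun w => Q w γ δ) z) ^ 2)
                * (if α = β then (1 : ℝ) else 0)) q)
        (fun q => pdx β (fun z => u z α * u z β) q + pdx β (fun z => ∑ γ, ∑ δ, pdx α (fun w => Q w γ δ) z * pdx β (fun w => Q w γ δ) z) q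
          - ((if α = β then (1:ℝ) else 0) * (1/2)) * pdx β (fun z => ∑ μ, ∑ γ, ∑ δ, (pdx μ (fun w => Q w γ δ) z) ^ 2) q) U := by
      intro q hq
      dsimp only
      rw [hrw, pdx_sub β (D ((smUU α β).add (smCC α β)) hq)
          (D (contDiffOn_const.mul smGG) hq),
        pdx_add β (D (smUU α β) hq) (D (smCC α β) hq),
        pdx_const_mul β _ (D smGG hq)]
    rw [pdx_congr_on hU eT hp α]
    have dU : DifferentiableAt ℝ (pdx β (fun z => u z α * u z β)) p := D (sm_pdx hU β (smUU α β)) hp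
    have dC : DifferentiableAt ℝ (pdx β (fun z => ∑ γ, ∑ δ, pdx α (fun w => Q w γ δ) z * pdx β (fun w => Q w γ δ) z)) p := D (sm_pdx hU β (smCC α β)) hp
    have dG : DifferentiableAt ℝ (pdx β (fun z => ∑ μ, ∑ γ, ∑ δ, (pdx μ (fun w => Q w γ δ) z) ^ 2)) p := D (sm_pdx hU β smGG) hp
    rw [pdx_sub α (dU.fun_add dC) (dG.const_mul _), pdx_add α dU dC, pdx_const_mul α _ dG]
  have hRHS : (-∑ α, ∑ β, pdx α (fun q => pdx β (fun z =>
            u z α * u z β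
              + (∑ γ, ∑ δ, pdx α (fun w => Q w γ δ) z * pdx β (fun w => Q w γ δ) z)
              - 1 / 2 * (∑ μ, ∑ γ, ∑ δ, (pdx μ (fun w => Q w γ δ) z) ^ 2)
                * (if α = β then (1 : ℝ) else 0)) q) p)
      = -(∑ α, ∑ β, pdx α (pdx β (fun z => u z α * u z β)) p)
        - (∑ α, ∑ β, pdx α (pdx β (fun z => ∑ γ, ∑ δ, pdx α (fun w => Q w γ δ) z * pdx β (fun w => Q w γ δ) z)) p)
        + 1/2 * ∑ α, pdx α (pdx α (fun z => ∑ μ, ∑ γ, ∑ δ, (pdx μ (fun w => Q w γ δ) z) ^ 2)) p := by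
    rw [Finset.sum_congr rfl fun α _ => Finset.sum_congr rfl fun β _ => hR α β]
    simp only [Finset.sum_sub_distrib, Finset.sum_add_distrib]
    have hdiag : ∀ α : Fin 3,
        (∑ β, ((if α = β then (1:ℝ) else 0) * (1/2)) * pdx α (pdx β (fun z => ∑ μ, ∑ γ, ∑ δ, (pdx μ (fun w => Q w γ δ) z) ^ 2)) p)
          = 1/2 * pdx α (pdx α (fun z => ∑ μ, ∑ γ, ∑ δ, (pdx μ (fun w => Q w γ δ) z) ^ 2)) p := by
      intro α
      rw [Finset.sum_congr rfl (fun β _ =>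
        show ((if α = β then (1:ℝ) else 0) * (1/2)) * pdx α (pdx β (fun z => ∑ μ, ∑ γ, ∑ δ, (pdx μ (fun w => Q w γ δ) z) ^ 2)) p
          = if α = β then 1/2 * pdx α (pdx β (fun z => ∑ μ, ∑ γ, ∑ δ, (pdx μ (fun w => Q w γ δ) z) ^ 2)) p else 0 from by
            by_cases h : α = β <;> simp [h])]
      simp
    rw [Finset.sum_congr rfl fun α _ => hdiag α, Finset.mul_sum]
    ring
  have C4tot : (∑ α, pdx α (fun q => ∑ γ, ∑ δ, pdx α (fun w => Q w γ δ) q * lapx (fun w => Q w γ δ) q) p)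
      = (∑ α, ∑ β, pdx α (pdx β (fun z => ∑ γ, ∑ δ, pdx α (fun w => Q w γ δ) z * pdx β (fun w => Q w γ δ) z)) p) - 1/2 * ∑ α, pdx α (pdx α (fun z => ∑ μ, ∑ γ, ∑ δ, (pdx μ (fun w => Q w γ δ) z) ^ 2)) p := by
    rw [Finset.sum_congr rfl fun α _ => C4 α, Finset.sum_sub_distrib, ← Finset.mul_sum]
  rw [hL2, C1, C2, C3, C5, C4tot, hRHS]
  ring
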